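/- Let f : M → ℝ^(n+1) and ξ : M → ℝ^(n+1) be smooth maps on a smooth manifold M, with F₀ = (f, 1) and Φ₀ = (ξ, 0) : M → ℝ^(n+2). Let λ, μ : M → ℝ be smooth with λ nowhere zero, and set F = λ F₀, Φ = Φ₀ + μ F₀. If for every x ∈ M and every tangent vector X at x, the derivative D_X ξ lies in the image of the differential of f at x, then for every x and X, the derivative D_X Φ lies in the span of F(x) and the image of the differential of F at x. -/

import Mathlib

/-- Lemma 3.2: any lifting F = λ(f,1), Φ = (ξ,0) + μ(f,1) of an
eqüiaffine pair (f,ξ) is eqüiaffine: D_XΦ lies in span{F(x)} + F_*(T_xM). -/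
theorem stmt_3 {n : ℕ} {M : Type*} [NormedAddCommGroup M] [NormedSpace ℝ M]
    (f ξ : M → (Fin (n + 1) → ℝ)) (lam mu : M → ℝ)
    (hf : Differentiable ℝ f) (hξ : Differentiable ℝ ξ)
    (hlam : Differentiable ℝ lam) (hmu : Differentiable ℝ mu)
    (hlam0 : ∀ x, lam x ≠ 0)
    (F₀ : M → (Fin (n + 1) → ℝ) × ℝ) (hF₀ : F₀ = fun x => (f x, 1))
    (Φ₀ : M → (Fin (n + 1) → ℝ) × ℝ) (hΦ₀ : Φ₀ = fun x => (ξ x, 0))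
    (F : M → (Fin (n + 1) → ℝ) × ℝ) (hF : F = fun x => lam x • F₀ x)
    (Φ : M → (Fin (n + 1) → ℝ) × ℝ) (hΦ : Φ = fun x => Φ₀ x + mu x • F₀ x)
    (heq : ∀ (x : M) (X : M), fderiv ℝ ξ x X ∈ Set.range (fderiv ℝ f x)) :
    ∀ (x : M) (X : M),
      fderiv ℝ Φ x X ∈ Submodule.span ℝ ({F x} ∪ Set.range (fderiv ℝ F x)) := by
  subst hF₀ hΦ₀ hF hΦ
  intro x X
  set S : Submodule ℝ ((Fin (n + 1) → ℝ) × ℝ) :=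
    Submodule.span ℝ (({(fun x => lam x • ((f x, 1) : (Fin (n + 1) → ℝ) × ℝ)) x} : Set _)
      ∪ Set.range (fderiv ℝ (fun x => lam x • ((f x, 1) : (Fin (n + 1) → ℝ) × ℝ)) x)) with hS
  have hF₀' : HasFDerivAt (fun x => ((f x, (1:ℝ)) : (Fin (n + 1) → ℝ) × ℝ))
      ((fderiv ℝ f x).prod 0) x :=
    HasFDerivAt.prodMk (hf x).hasFDerivAt (hasFDerivAt_const 1 x)
  have hF' : HasFDerivAt (fun x => lam x • ((f x, (1:ℝ)) : (Fin (n + 1) → ℝ) × ℝ))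
      (lam x • ((fderiv ℝ f x).prod 0) + (fderiv ℝ lam x).smulRight (f x, 1)) x :=
    (hlam x).hasFDerivAt.smul hF₀'
  have hΦ' : HasFDerivAt (fun x => ((ξ x, (0:ℝ)) : (Fin (n + 1) → ℝ) × ℝ) + mu x • (f x, 1))
      (((fderiv ℝ ξ x).prod 0) +
        (mu x • ((fderiv ℝ f x).prod 0) + (fderiv ℝ mu x).smulRight (f x, 1))) x :=
    (HasFDerivAt.prodMk (hξ x).hasFDerivAt (hasFDerivAt_const 0 x)).add ((hmu x).hasFDerivAt.smul hF₀')
  -- membership of F₀ x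
  have hmemF : ((f x, (1:ℝ)) : (Fin (n + 1) → ℝ) × ℝ) ∈ S := by
    have h1 : (fun x => lam x • ((f x, 1) : (Fin (n + 1) → ℝ) × ℝ)) x ∈ S :=
      Submodule.subset_span (Or.inl rfl)
    have h2 := S.smul_mem (lam x)⁻¹ h1
    simpa [smul_smul, inv_mul_cancel₀ (hlam0 x)] using h2
  -- membership of (Df X', 0) for all X'
  have hmemD : ∀ X' : M, ((fderiv ℝ f x X', (0:ℝ)) : (Fin (n + 1) → ℝ) × ℝ) ∈ S := by
    intro X'
    have h1 : fderiv ℝ (fun x => lam x • ((f x, 1) : (Fin (n + 1) → ℝ) × ℝ)) x X' ∈ S :=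
      Submodule.subset_span (Or.inr ⟨X', rfl⟩)
    rw [hF'.fderiv] at h1
    have h2 : lam x • ((fderiv ℝ f x X', (0:ℝ)) : (Fin (n + 1) → ℝ) × ℝ) ∈ S := by
      have h3 := S.sub_mem h1 (S.smul_mem (fderiv ℝ lam x X') hmemF)
      simpa [ContinuousLinearMap.smulRight_apply, Prod.smul_mk] using h3
    have h4 := S.smul_mem (lam x)⁻¹ h2
    simpa [smul_smul, inv_mul_cancel₀ (hlam0 x)] using h4
  obtain ⟨Y, hY⟩ := heq x X
  rw [hΦ'.fderiv]
  have hξ0 : ((fderiv ℝ ξ x).prod 0) X = ((fderiv ℝ f x Y, (0:ℝ)) : (Fin (n + 1) → ℝ) × ℝ) := by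
    simp [hY]
  simp only [ContinuousLinearMap.add_apply, ContinuousLinearMap.smul_apply,
    ContinuousLinearMap.smulRight_apply, hξ0]
  exact S.add_mem (hmemD Y)
    (S.add_mem (by simpa using S.smul_mem (mu x) (hmemD X))
      (S.smul_mem _ hmemF))
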